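/- Let N, d_e be natural numbers with d_e ≤ N, let p be a real number with 0 < p < 1 and N·p ≤ d_e, and let C : ℕ → ℕ satisfy C(j) = 0 for all j < d_e and C(d_e + k) ≤ binom(N − d_e, k) · C(d_e) for all k ≤ N − d_e. Then the total logical error rate L = Σ_{j=0}^{N} C(j) · p^j · (1 − p)^{N − j} satisfies L ≤ e^{N·p} · C(d_e) · p^{d_e} · (1 − p)^{N − d_e}. -/

import Mathlib

open Finset Real

/-- Under the paper's counting hypotheses, the total logical error rate
    `L = Σ_{j=0}^{N} C(j) p^j (1-p)^{N-j}` is at most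
    `e^{N·p} · C(d_e) · p^{d_e} · (1-p)^{N-d_e}`. -/
theorem logical_error_rate_bound (N de : ℕ) (hdeN : de ≤ N) (p : ℝ)
    (hp0 : 0 < p) (hp1 : p < 1) (hNp : (N : ℝ) * p ≤ (de : ℝ))
    (C : ℕ → ℕ) (hC0 : ∀ j < de, C j = 0)
    (hC : ∀ k ≤ N - de, C (de + k) ≤ Nat.choose (N - de) k * C de) :
    ∑ j ∈ Finset.range (N + 1), (C j : ℝ) * p ^ j * (1 - p) ^ (N - j) ≤
      Real.exp ((N : ℝ) * p) * (C de : ℝ) * p ^ de * (1 - p) ^ (N - de) := by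
  set M := N - de with hM
  have h1p : (0:ℝ) < 1 - p := by linarith
  -- key : 1 ≤ exp(Np) * (1-p)^M
  have hMle : (M:ℝ) ≤ (N:ℝ) * (1 - p) := by
    have hc : (M:ℝ) = (N:ℝ) - (de:ℝ) := by rw [hM, Nat.cast_sub hdeN]
    rw [hc]; nlinarith
  have hlog : -Real.log (1 - p) ≤ p / (1 - p) := by
    have h := Real.log_le_sub_one_of_pos (show (0:ℝ) < (1-p)⁻¹ from inv_pos.mpr h1p)
    rw [Real.log_inv] at h
    have h2 : (1-p)⁻¹ - 1 = p / (1-p) := by field_simp; ring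
    linarith [h2 ▸ h]
  have hkey : (1:ℝ) ≤ Real.exp ((N:ℝ) * p) * (1 - p) ^ M := by
    have hpow : (1-p)^M = Real.exp ((M:ℝ) * Real.log (1-p)) := by
      rw [← Real.log_pow, Real.exp_log (pow_pos h1p M)]
    rw [hpow, ← Real.exp_add]
    have h2 : (M:ℝ) * (-Real.log (1-p)) ≤ (M:ℝ) * (p/(1-p)) :=
      mul_le_mul_of_nonneg_left hlog (Nat.cast_nonneg M)
    have h3 : (M:ℝ) * (p/(1-p)) ≤ (N:ℝ) * p := by
      have h4 := mul_le_mul_of_nonneg_right hMle (le_of_lt (div_pos hp0 h1p))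
      calc (M:ℝ)*(p/(1-p)) ≤ (N:ℝ)*(1-p)*(p/(1-p)) := h4
        _ = (N:ℝ)*p := by field_simp
    have h5 : (0:ℝ) ≤ (N:ℝ)*p + (M:ℝ) * Real.log (1-p) := by nlinarith
    calc (1:ℝ) = Real.exp 0 := (Real.exp_zero).symm
      _ ≤ _ := Real.exp_le_exp.mpr h5
  -- split the sum
  have hsplit : ∑ j ∈ Finset.range (N+1), (C j:ℝ)*p^j*(1-p)^(N-j)
      = ∑ k ∈ Finset.range (M+1), (C (de+k):ℝ)*p^(de+k)*(1-p)^(M-k) := by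
    have hN1 : N + 1 = de + (M+1) := by omega
    rw [hN1, Finset.sum_range_add]
    have h0 : ∑ j ∈ Finset.range de, (C j:ℝ)*p^j*(1-p)^(N-j) = 0 := by
      apply Finset.sum_eq_zero; intro j hj
      rw [hC0 j (Finset.mem_range.mp hj)]; simp
    rw [h0, zero_add]
    apply Finset.sum_congr rfl; intro k hk
    congr 2
    omega
  -- binomial sum = 1
  have hbinom : ∑ k ∈ Finset.range (M+1), ((M.choose k:ℝ))*p^k*(1-p)^(M-k) = 1 := by
    calc ∑ k ∈ Finset.range (M+1), ((M.choose k:ℝ))*p^k*(1-p)^(M-k)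
        = ∑ k ∈ Finset.range (M+1), p^k*(1-p)^(M-k)*((M.choose k:ℝ)) := by
          apply Finset.sum_congr rfl; intro k _; ring
      _ = (p+(1-p))^M := (add_pow p (1-p) M).symm
      _ = 1 := by norm_num
  -- termwise bound
  have hterm : ∑ k ∈ Finset.range (M+1), (C (de+k):ℝ)*p^(de+k)*(1-p)^(M-k)
      ≤ ∑ k ∈ Finset.range (M+1), (C de:ℝ)*p^de*(((M.choose k:ℝ))*p^k*(1-p)^(M-k)) := by
    apply Finset.sum_le_sum
    intro k hk
    have hkM : k ≤ M := by
      have := Finset.mem_range.mp hk; omega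
    have hCk : (C (de+k):ℝ) ≤ (M.choose k:ℝ) * (C de:ℝ) := by
      exact_mod_cast hC k hkM
    have hpos : (0:ℝ) ≤ p^(de+k)*(1-p)^(M-k) :=
      mul_nonneg (pow_nonneg hp0.le _) (pow_nonneg h1p.le _)
    calc (C (de+k):ℝ)*p^(de+k)*(1-p)^(M-k)
        = (C (de+k):ℝ) * (p^(de+k)*(1-p)^(M-k)) := by ring
      _ ≤ ((M.choose k:ℝ) * (C de:ℝ)) * (p^(de+k)*(1-p)^(M-k)) :=
          mul_le_mul_of_nonneg_right hCk hpos
      _ = (C de:ℝ)*p^de*(((M.choose k:ℝ))*p^k*(1-p)^(M-k)) := by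
          rw [pow_add]; ring
  have hmid : ∑ j ∈ Finset.range (N+1), (C j:ℝ)*p^j*(1-p)^(N-j) ≤ (C de:ℝ)*p^de := by
    rw [hsplit]
    calc ∑ k ∈ Finset.range (M+1), (C (de+k):ℝ)*p^(de+k)*(1-p)^(M-k)
        ≤ ∑ k ∈ Finset.range (M+1), (C de:ℝ)*p^de*(((M.choose k:ℝ))*p^k*(1-p)^(M-k)) := hterm
      _ = (C de:ℝ)*p^de * ∑ k ∈ Finset.range (M+1), ((M.choose k:ℝ))*p^k*(1-p)^(M-k) := by
          rw [Finset.mul_sum]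
      _ = (C de:ℝ)*p^de := by rw [hbinom, mul_one]
  have hfin : (C de:ℝ)*p^de ≤ Real.exp ((N:ℝ)*p) * (C de:ℝ) * p^de * (1-p)^M := by
    have hnn : (0:ℝ) ≤ (C de:ℝ)*p^de :=
      mul_nonneg (Nat.cast_nonneg _) (pow_nonneg hp0.le _)
    calc (C de:ℝ)*p^de = (C de:ℝ)*p^de * 1 := by ring
      _ ≤ (C de:ℝ)*p^de * (Real.exp ((N:ℝ)*p) * (1-p)^M) :=
          mul_le_mul_of_nonneg_left hkey hnn
      _ = Real.exp ((N:ℝ)*p) * (C de:ℝ) * p^de * (1-p)^M := by ring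
  exact le_trans hmid hfin
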